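/- Under the cohomology ladder setup, for every integer k the sequence 0 → BX^k → CX^k ⊕ BY^k → CY^k → 0, in which the first map is x ↦ (j^k x, −θ^k x) and the second map is (w̃, y) ↦ η^k w̃ + i^k y, is a short exact sequence of Λ-modules; moreover the map w ↦ (g^k w, 0) is a right section of the second map. (The exact sequence established in Section 4 of the paper, abstracting 0 → H^k(X) → H^k(W̃) ⊕ H^k(Y) → H^k(W) → 0.) -/

import Mathlib

open Function

/-- Section 4: under the cohomology ladder setup, for every `k` the sequence
`0 → BX^k → CX^k ⊕ BY^k → CY^k → 0`, with maps `x ↦ (j x, -θ x)` and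
`(w̃, y) ↦ η w̃ + i y`, is short exact, and `w ↦ (g w, 0)` is a right section. -/
theorem cohomology_short_exact_sequence
    (Λ : Type*) [CommRing Λ]
    (R BX BY CX CY : ℤ → Type*)
    [∀ k, AddCommGroup (R k)] [∀ k, Module Λ (R k)]
    [∀ k, AddCommGroup (BX k)] [∀ k, Module Λ (BX k)]
    [∀ k, AddCommGroup (BY k)] [∀ k, Module Λ (BY k)]
    [∀ k, AddCommGroup (CX k)] [∀ k, Module Λ (CX k)]
    [∀ k, AddCommGroup (CY k)] [∀ k, Module Λ (CY k)]
    (rX : ∀ k, R k →ₗ[Λ] BX k) (j : ∀ k, BX k →ₗ[Λ] CX k) (dX : ∀ k, CX k →ₗ[Λ] R (k+1))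
    (rY : ∀ k, R k →ₗ[Λ] BY k) (i : ∀ k, BY k →ₗ[Λ] CY k) (dY : ∀ k, CY k →ₗ[Λ] R (k+1))
    (hXex₁ : ∀ k, Function.Exact (rX k) (j k))
    (hXex₂ : ∀ k, Function.Exact (j k) (dX k))
    (hXex₃ : ∀ k, Function.Exact (dX k) (rX (k+1)))
    (hYex₁ : ∀ k, Function.Exact (rY k) (i k))
    (hYex₂ : ∀ k, Function.Exact (i k) (dY k))
    (hYex₃ : ∀ k, Function.Exact (dY k) (rY (k+1)))
    (f : ∀ k, BY k →ₗ[Λ] BX k) (g : ∀ k, CY k →ₗ[Λ] CX k)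
    (hfr : ∀ k, (f k).comp (rY k) = rX k)
    (hjf : ∀ k, (j k).comp (f k) = (g k).comp (i k))
    (hdg : ∀ k, (dX k).comp (g k) = dY k)
    (θ : ∀ k, BX k →ₗ[Λ] BY k) (η : ∀ k, CX k →ₗ[Λ] CY k)
    (hθr : ∀ k, (θ k).comp (rX k) = rY k)
    (hiθ : ∀ k, (i k).comp (θ k) = (η k).comp (j k))
    (hdη : ∀ k, (dY k).comp (η k) = dX k)
    (hθf : ∀ k, (θ k).comp (f k) = LinearMap.id)
    (hηg : ∀ k, (η k).comp (g k) = LinearMap.id)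
    (k : ℤ) :
    Function.Injective ⇑(LinearMap.prod (j k) (-(θ k))) ∧
    Function.Exact ⇑(LinearMap.prod (j k) (-(θ k))) ⇑(LinearMap.coprod (η k) (i k)) ∧
    Function.Surjective ⇑(LinearMap.coprod (η k) (i k)) ∧
    (∀ w : CY k, LinearMap.coprod (η k) (i k) ((g k) w, 0) = w) := by

  have hsec : ∀ w : CY k, LinearMap.coprod (η k) (i k) ((g k) w, 0) = w := by
    intro w
    simp only [LinearMap.coprod_apply, map_zero, add_zero]
    exact LinearMap.congr_fun (hηg k) w
  refine ⟨?_, ?_, fun w => ⟨((g k) w, 0), hsec w⟩, hsec⟩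
  · rw [← LinearMap.ker_eq_bot, LinearMap.ker_eq_bot']
    intro x hx
    have h1 : j k x = 0 := congrArg Prod.fst hx
    have h2 : θ k x = 0 := by
      have := congrArg Prod.snd hx; simpa using this
    obtain ⟨r, hr⟩ := (hXex₁ k x).mp h1
    have hry : rY k r = 0 := by
      rw [← LinearMap.congr_fun (hθr k) r, LinearMap.comp_apply, hr, h2]
    have : rX k r = 0 := by
      rw [← LinearMap.congr_fun (hfr k) r, LinearMap.comp_apply, hry, map_zero]
    rw [← hr, this]
  · intro p
    constructor
    · rintro hp
      obtain ⟨w, y⟩ := p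
      simp only [LinearMap.coprod_apply] at hp
      have hdXw : dX k w = 0 := by
        have h1 : dY k (η k w) = dX k w := LinearMap.congr_fun (hdη k) w
        have h2 : dY k (i k y) = 0 := (hYex₂ k (i k y)).mpr ⟨y, rfl⟩
        have := congrArg (dY k) hp
        rw [map_add, h1, h2, add_zero, map_zero] at this
        exact this
      obtain ⟨x₀, hx₀⟩ := (hXex₂ k w).mp hdXw
      have hi : i k (y + θ k x₀) = 0 := by
        have h3 : i k (θ k x₀) = η k (j k x₀) := LinearMap.congr_fun (hiθ k) x₀
        rw [map_add, h3, hx₀]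
        rw [add_comm] at hp; exact hp
      obtain ⟨r, hr⟩ := (hYex₁ k (y + θ k x₀)).mp hi
      refine ⟨x₀ - rX k r, ?_⟩
      have hjr : j k (rX k r) = 0 := (hXex₁ k (rX k r)).mpr ⟨r, rfl⟩
      have hθrX : θ k (rX k r) = rY k r := LinearMap.congr_fun (hθr k) r
      have : (LinearMap.prod (j k) (-(θ k))) (x₀ - rX k r) =
          (j k x₀ - j k (rX k r), -(θ k x₀ - θ k (rX k r))) := by
        simp [LinearMap.prod_apply, map_sub]; abel
      have h4 : y = -(θ k x₀ - θ k (rX k r)) := by rw [hθrX, hr]; abel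
      rw [this, hjr, sub_zero, hx₀, ← h4]
    · rintro ⟨x, rfl⟩
      simp only [LinearMap.prod_apply, Function.prod, LinearMap.coprod_apply, LinearMap.neg_apply,
        map_neg]
      have h3 : i k (θ k x) = η k (j k x) := LinearMap.congr_fun (hiθ k) x
      rw [h3]; abel
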